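/- Let b be a prime, m ≥ 1, and let c_{i,j} ∈ {0,…,b−1} for 1 ≤ i ≤ j ≤ m with c_{i,i} ≢ 0 (mod b) for all i. Let P = {(n/b^m, ν(n)) : n = 0,1,…,b^m−1} be the associated NUT net. Then disp(P) ≤ (2b/b^m)(1 − b/(2b^m)); i.e., every axis-parallel box B ⊆ [0,1]² containing no point of P has area at most (2b/b^m)(1 − b/(2b^m)). -/

import Mathlib

/-- The set of areas of axis-parallel half-open boxes `[x1,y1) x [x2,y2)` inside `[0,1]^2`
containing no point of `P`. -/
def emptyBoxAreas (P : Set (ℝ × ℝ)) : Set ℝ :=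
  { A | ∃ x₁ y₁ x₂ y₂ : ℝ,
      0 ≤ x₁ ∧ x₁ ≤ y₁ ∧ y₁ ≤ 1 ∧ 0 ≤ x₂ ∧ x₂ ≤ y₂ ∧ y₂ ≤ 1 ∧
      (∀ p ∈ P, p ∉ Set.Ico x₁ y₁ ×ˢ Set.Ico x₂ y₂) ∧
      A = (y₁ - x₁) * (y₂ - x₂) }

/-- The dispersion of a point set `P ⊆ [0,1]^2`: the supremum of areas of empty
axis-parallel boxes. -/
noncomputable def disp (P : Set (ℝ × ℝ)) : ℝ := sSup (emptyBoxAreas P)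
/-- The `i`-th digit (1-based) of `n` in base `b`, with the convention that the
`0`-th digit is `0`. -/
def nthDigit (b n i : ℕ) : ℕ := if i = 0 then 0 else n / b ^ (i - 1) % b
/-- The second-coordinate map `ν` of a NUT net with coefficient matrix `c`:
`ν(n) = Σ_{i=1}^m ((c_{i,i}e_i + c_{i,i+1}e_{i+1} + ⋯ + c_{i,m}e_m) mod b)/b^i`. -/
noncomputable def nutMap (b m : ℕ) (c : ℕ → ℕ → ℕ) (n : ℕ) : ℝ :=
  ∑ i ∈ Finset.Icc 1 m,
    (((∑ j ∈ Finset.Icc i m, c i j * nthDigit b n j) % b : ℕ) : ℝ) / (b : ℝ) ^ i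

/-- Integer version of the NUT map (with affine shifts `t`), scaled by `b^m`. -/
def Ynet (b m : ℕ) (c : ℕ → ℕ → ℕ) (t : ℕ → ℕ) (n : ℕ) : ℕ :=
  ∑ i ∈ Finset.Icc 1 m, ((t i + ∑ j ∈ Finset.Icc i m, c i j * nthDigit b n j) % b) * b ^ (m - i)

lemma nthDigit_add_mul_one (b e q : ℕ) (he : e < b) :
    nthDigit b (e + b * q) 1 = e := by
  unfold nthDigit
  rw [if_neg one_ne_zero]
  norm_num
  exact Nat.mod_eq_of_lt he

lemma nthDigit_add_mul_succ (b e q j : ℕ) (hb : 0 < b) (he : e < b) (hj : 1 ≤ j) :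
    nthDigit b (e + b * q) (j + 1) = nthDigit b q j := by
  unfold nthDigit
  rw [if_neg (by omega), if_neg (by omega)]
  obtain ⟨j', rfl⟩ : ∃ j', j = j' + 1 := ⟨j - 1, by omega⟩
  rw [Nat.add_sub_cancel, Nat.add_sub_cancel]
  congr 1
  rw [pow_succ', ← Nat.div_div_eq_div_mul]
  congr 1
  rw [Nat.add_mul_div_left _ _ hb, Nat.div_eq_of_lt he, zero_add]

lemma Ynet_succ (b M : ℕ) (hb : 0 < b) (c : ℕ → ℕ → ℕ) (t : ℕ → ℕ) (e q : ℕ) (he : e < b) :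
    Ynet b (M+1) c t (e + b * q)
      = ((t 1 + (c 1 1 * e + ∑ j ∈ Finset.Icc 1 M, c 1 (j+1) * nthDigit b q j)) % b) * b ^ M
        + Ynet b M (fun i j => c (i+1) (j+1)) (fun i => t (i+1)) q := by
  unfold Ynet
  have hins : Finset.Icc 1 (M+1) = insert 1 (Finset.Icc 2 (M+1)) := by
    ext x; simp only [Finset.mem_Icc, Finset.mem_insert]; omega
  have hmap : ∀ lo : ℕ, Finset.Icc (lo+1) (M+1) = Finset.map (addRightEmbedding 1) (Finset.Icc lo M) := by
    intro lo; rw [Finset.map_add_right_Icc]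
  rw [hins, Finset.sum_insert (by simp)]
  congr 1
  · -- row 1
    rw [Nat.add_sub_cancel]
    have hXY : ∑ j ∈ Finset.Icc 1 (M+1), c 1 j * nthDigit b (e + b*q) j
        = c 1 1 * e + ∑ j ∈ Finset.Icc 1 M, c 1 (j+1) * nthDigit b q j := by
      rw [hins, Finset.sum_insert (by simp)]
      congr 1
      · rw [nthDigit_add_mul_one b e q he]
      · rw [hmap 1, Finset.sum_map]
        apply Finset.sum_congr rfl
        intro j hj
        rw [Finset.mem_Icc] at hj
        simp only [addRightEmbedding_apply]
        rw [nthDigit_add_mul_succ b e q j hb he hj.1]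
    rw [hXY]
  · -- rows 2..M+1
    rw [hmap 1, Finset.sum_map]
    apply Finset.sum_congr rfl
    intro i hi
    rw [Finset.mem_Icc] at hi
    simp only [addRightEmbedding_apply]
    have h1 : ∑ j ∈ Finset.Icc (i+1) (M+1), c (i+1) j * nthDigit b (e + b*q) j
        = ∑ j ∈ Finset.Icc i M, c (i+1) (j+1) * nthDigit b q j := by
      rw [hmap i, Finset.sum_map]
      apply Finset.sum_congr rfl
      intro j hj
      rw [Finset.mem_Icc] at hj
      simp only [addRightEmbedding_apply]
      rw [nthDigit_add_mul_succ b e q j hb he (le_trans hi.1 hj.1)]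
    rw [h1, show M + 1 - (i + 1) = M - i from by omega]

lemma Ynet_lt (b : ℕ) (hb : 0 < b) :
    ∀ m (c : ℕ → ℕ → ℕ) (t : ℕ → ℕ) (n : ℕ), Ynet b m c t n < b ^ m := by
  intro m
  induction m with
  | zero =>
    intro c t n
    unfold Ynet
    rw [Finset.Icc_eq_empty (by omega)]
    simp
  | succ M ih =>
    intro c t n
    have hn : n % b + b * (n / b) = n := Nat.mod_add_div n b
    have h := Ynet_succ b M hb c t (n % b) (n / b) (Nat.mod_lt _ hb)
    rw [hn] at h
    rw [h]
    have h1 : (t 1 + (c 1 1 * (n % b) + ∑ j ∈ Finset.Icc 1 M, c 1 (j+1) * nthDigit b (n/b) j)) % b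
        ≤ b - 1 := by
      have := Nat.mod_lt (t 1 + (c 1 1 * (n % b) + ∑ j ∈ Finset.Icc 1 M, c 1 (j+1) * nthDigit b (n/b) j)) hb
      omega
    have h2 := ih (fun i j => c (i+1) (j+1)) (fun i => t (i+1)) (n / b)
    have h3 : (t 1 + (c 1 1 * (n % b) + ∑ j ∈ Finset.Icc 1 M, c 1 (j+1) * nthDigit b (n/b) j)) % b * b ^ M
        ≤ (b - 1) * b ^ M := Nat.mul_le_mul_right _ h1
    have hsum : (b - 1) * b ^ M + b ^ M = b ^ (M+1) := by
      have hb1 : b - 1 + 1 = b := by omega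
      calc (b-1) * b^M + b^M = (b - 1 + 1) * b^M := by ring
        _ = b * b^M := by rw [hb1]
        _ = b^(M+1) := (pow_succ' b M).symm
    calc _ ≤ (b-1) * b^M + Ynet b M (fun i j => c (i+1) (j+1)) (fun i => t (i+1)) (n/b) :=
          Nat.add_le_add_right h3 _
      _ < (b-1) * b^M + b^M := Nat.add_lt_add_left h2 _
      _ = b ^ (M+1) := hsum

lemma mod_shift (N β Y : ℕ) (hN : 0 < N) (hY : Y < N) :
    ∃ u, u < N ∧ (β + u) % N = Y := by
  refine ⟨(N + Y - β % N) % N, Nat.mod_lt _ hN, ?_⟩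
  rw [Nat.add_mod β, Nat.mod_mod_of_dvd _ dvd_rfl, ← Nat.add_mod]
  have h0 : β % N < N := Nat.mod_lt _ hN
  have h2 := Nat.div_add_mod β N
  have h3 : β + (N + Y - β % N) = N * (β / N) + (N + Y) := by
    generalize hg : N * (β / N) = s at h2 ⊢
    generalize hr : β % N = r at h0 h2 ⊢
    omega
  rw [h3, Nat.mul_add_mod, Nat.add_mod_left, Nat.mod_eq_of_lt hY]

lemma exists_digit (b : ℕ) (hb : Nat.Prime b) (a Λ D : ℕ) (ha : a % b ≠ 0) (hD : D < b) :
    ∃ e, e < b ∧ (Λ + a * e) % b = D := by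
  haveI : Fact (Nat.Prime b) := ⟨hb⟩
  haveI : NeZero b := ⟨hb.pos.ne'⟩
  have haz : (a : ZMod b) ≠ 0 := by
    rw [Ne, ZMod.natCast_eq_zero_iff]
    rw [Nat.dvd_iff_mod_eq_zero]
    exact ha
  set E : ZMod b := ((D : ZMod b) - (Λ : ZMod b)) * (a : ZMod b)⁻¹ with hE
  refine ⟨E.val, ZMod.val_lt E, ?_⟩
  have hcast : ((Λ + a * E.val : ℕ) : ZMod b) = (D : ZMod b) := by
    push_cast
    rw [ZMod.natCast_val, ZMod.cast_id, hE]
    have hinv : (a : ZMod b) * (((D : ZMod b) - Λ) * (a : ZMod b)⁻¹) = (D : ZMod b) - Λ := by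
      rw [mul_comm ((D : ZMod b) - (Λ:ZMod b)) ((a:ZMod b)⁻¹), ← mul_assoc,
        mul_inv_cancel₀ haz, one_mul]
    rw [hinv]
    ring
  have := congrArg ZMod.val hcast
  rwa [ZMod.val_natCast, ZMod.val_natCast, Nat.mod_eq_of_lt hD] at this

lemma keyLemma (b : ℕ) (hb : Nat.Prime b) :
    ∀ m k (c : ℕ → ℕ → ℕ) (t : ℕ → ℕ) (s p β L : ℕ),
      1 ≤ k → k ≤ m →
      (∀ i, 1 ≤ i → i ≤ m → c i i % b ≠ 0) →
      b ^ k ≤ L →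
      (∀ n, s ≤ n → n < s + p → ∀ u, u < L → Ynet b m c t n ≠ (β + u) % b ^ m) →
      p ≤ 2 * b ^ (m - k) - 2 := by
  have hb0 : 0 < b := hb.pos
  have hb2 : 2 ≤ b := hb.two_le
  intro m
  induction m with
  | zero => intro k c t s p β L hk1 hkm _ _ _; omega
  | succ M ih =>
    intro k c t s p β L hk1 hkm hdiag hL hemp
    rcases Nat.lt_or_ge k (M+1) with hkM | hkM
    · -- inductive step: k ≤ M
      have hkM' : k ≤ M := by omega
      set A := (s + (b-1)) / b with hA
      set B := (s + p) / b with hB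
      set p' := B - A with hp'
      have hdm1 := Nat.div_add_mod (s + (b-1)) b
      rw [← hA] at hdm1
      have hr1 : (s + (b-1)) % b < b := Nat.mod_lt _ hb0
      have hsA : s ≤ b * A := by
        have h1 : s + (b-1) ≤ b * A + (b-1) := by
          rw [← hdm1]
          exact Nat.add_le_add_left (by omega) _
        exact Nat.le_of_add_le_add_right h1
      have hAs : b * A ≤ s + (b-1) := by
        rw [← hdm1]; exact Nat.le_add_right _ _
      have hdm2 := Nat.div_add_mod (s + p) b
      rw [← hB] at hdm2
      have hr2 : (s + p) % b < b := Nat.mod_lt _ hb0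
      have hBle : b * B ≤ s + p := Nat.le.intro hdm2
      have hBgt : s + p < b * B + b := by
        rw [← hdm2]; exact Nat.add_lt_add_left hr2 _
      have hIH : p' ≤ 2 * b ^ (M - k) - 2 := by
        apply ih k (fun i j => c (i+1) (j+1)) (fun i => t (i+1)) A p' β (min L (b^M)) hk1 hkM'
          (fun i h1 h2 => hdiag (i+1) (by omega) (by omega))
          (le_min hL (Nat.pow_le_pow_right (by omega) hkM'))
        intro q hq1 hq2 u hu heq
        have hqB : q < B := by omega
        have hdvd : b ^ M ∣ b ^ (M+1) := pow_dvd_pow b (Nat.le_succ M)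
        have hTm : (β + u) % b ^ (M+1) % b ^ M = (β + u) % b ^ M := Nat.mod_mod_of_dvd _ hdvd
        have hTlt : (β + u) % b ^ (M+1) < b ^ (M+1) := Nat.mod_lt _ (pow_pos hb0 _)
        have hDb : (β + u) % b ^ (M+1) / b ^ M < b := by
          apply Nat.div_lt_of_lt_mul
          rw [← pow_succ]
          exact hTlt
        obtain ⟨e, heb, hrow⟩ := exists_digit b hb (c 1 1)
          (t 1 + ∑ j ∈ Finset.Icc 1 M, c 1 (j+1) * nthDigit b q j)
          ((β + u) % b ^ (M+1) / b ^ M) (hdiag 1 (by omega) (by omega)) hDb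
        have hY := Ynet_succ b M hb0 c t e q heb
        have hrow' : (t 1 + (c 1 1 * e + ∑ j ∈ Finset.Icc 1 M, c 1 (j+1) * nthDigit b q j)) % b
            = (β + u) % b ^ (M+1) / b ^ M := by
          rw [show t 1 + (c 1 1 * e + ∑ j ∈ Finset.Icc 1 M, c 1 (j+1) * nthDigit b q j)
              = (t 1 + ∑ j ∈ Finset.Icc 1 M, c 1 (j+1) * nthDigit b q j) + c 1 1 * e by ring]
          exact hrow
        have heqY : Ynet b (M+1) c t (e + b * q) = (β + u) % b ^ (M+1) := by
          rw [hY, hrow', heq, ← hTm]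
          rw [mul_comm]
          exact Nat.div_add_mod _ _
        have hlow : s ≤ e + b * q := by
          calc s ≤ b * A := hsA
            _ ≤ b * q := mul_le_mul_right hq1 b
            _ ≤ e + b * q := Nat.le_add_left _ _
        have hhigh : e + b * q < s + p := by
          have h6 : e + b * q < b * (q + 1) := by
            have h7 : e + b * q < b + b * q := Nat.add_lt_add_right heb _
            have h8 : b + b * q = b * (q+1) := by ring
            rw [h8] at h7
            exact h7
          calc e + b * q < b * (q+1) := h6
            _ ≤ b * B := mul_le_mul_right (by omega) b
            _ ≤ s + p := hBle
        exact hemp (e + b * q) hlow hhigh u (lt_of_lt_of_le hu (min_le_left _ _)) heqY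
      -- final arithmetic
      have hx : b ^ (M + 1 - k) = b * b ^ (M - k) := by
        rw [show M + 1 - k = (M - k) + 1 by omega, pow_succ']
      have hXpos : 0 < b ^ (M - k) := pow_pos hb0 _
      obtain ⟨d, hd⟩ := Nat.exists_eq_add_of_le (Nat.le_mul_of_pos_right 2 hXpos)
      have hw2 : b * p' + 2 * b ≤ 2 * b ^ (M + 1 - k) := by
        have h1 : b * p' ≤ b * (2 * b ^ (M-k) - 2) := mul_le_mul_right hIH b
        have h2 : b * (2 * b ^ (M-k) - 2) + 2*b = 2 * b^(M+1-k) := by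
          calc b * (2 * b^(M-k) - 2) + 2*b = b * d + 2*b := by rw [hd, Nat.add_sub_cancel_left]
            _ = b * (2 + d) := by ring
            _ = b * (2 * b^(M-k)) := by rw [← hd]
            _ = 2 * (b * b^(M-k)) := by ring
            _ = 2 * b^(M+1-k) := by rw [← hx]
        calc b * p' + 2*b ≤ b * (2 * b^(M-k) - 2) + 2*b := Nat.add_le_add_right h1 _
          _ = 2 * b^(M+1-k) := h2
      have hvw : b * B ≤ b * A + b * p' := by
        have h9 : B ≤ A + p' := by omega
        calc b * B ≤ b * (A + p') := mul_le_mul_right h9 b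
          _ = b * A + b * p' := by ring
      have final : ∀ u v w Z : ℕ, s ≤ u → u ≤ s + (b-1) → v ≤ s + p → s + p < v + b →
          v ≤ u + w → w + 2*b ≤ 2*Z → p ≤ 2*Z - 2 := by
        intro u v w Z h1 h2 h3 h4 h5 h6
        omega
      exact final (b*A) (b*B) (b*p') (b^(M+1-k)) hsA hAs hBle hBgt hvw hw2
    · -- base case k = M+1
      have hkeq : k = M + 1 := by omega
      subst hkeq
      rw [Nat.sub_self, pow_zero]
      by_contra hcon
      push_neg at hcon
      have hp0 : 0 < p := by omega
      have hYlt := Ynet_lt b hb0 (M+1) c t s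
      obtain ⟨u, hu, hmod⟩ := mod_shift (b^(M+1)) β (Ynet b (M+1) c t s) (pow_pos hb0 _) hYlt
      exact hemp s le_rfl (by omega) u (lt_of_lt_of_le hu hL) hmod.symm

lemma prodBound (b m p L : ℕ) (hb : 2 ≤ b) (hm : 2 ≤ m) (hp : p ≤ b ^ m) (hL : L ≤ b ^ m)
    (hkey : ∀ k, 1 ≤ k → k ≤ m → b ^ k ≤ L → p ≤ 2 * b ^ (m - k) - 2) :
    (p + 1) * (L + 1) + b ^ 2 ≤ 2 * b ^ (m + 1) := by
  have hb0 : 0 < b := by omega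
  rcases lt_or_ge L b with hLb | hLb
  · have h1 : (p+1) * (L+1) ≤ (b^m + 1) * b :=
      Nat.mul_le_mul (Nat.add_le_add_right hp 1) (by omega)
    have e1 : (b^m + 1) * b = b^(m+1) + b := by
      rw [add_mul, one_mul, ← pow_succ]
    have h4 : b + b^2 ≤ b^3 := by
      have hbb : b ≤ b^2 := by
        calc b = b^1 := (pow_one b).symm
          _ ≤ b^2 := Nat.pow_le_pow_right (by omega) (by omega)
      calc b + b^2 ≤ b^2 + b^2 := Nat.add_le_add_right hbb _
        _ = 2 * b^2 := by ring
        _ ≤ b * b^2 := Nat.mul_le_mul_right _ hb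
        _ = b^3 := by ring
    have h2 : b^3 ≤ b^(m+1) := Nat.pow_le_pow_right (by omega) (by omega)
    calc (p+1)*(L+1) + b^2 ≤ (b^(m+1) + b) + b^2 := by
          rw [← e1]; exact Nat.add_le_add_right h1 _
      _ = b^(m+1) + (b + b^2) := by ring
      _ ≤ b^(m+1) + b^3 := Nat.add_le_add_left h4 _
      _ ≤ b^(m+1) + b^(m+1) := Nat.add_le_add_left h2 _
      _ = 2 * b^(m+1) := by ring
  · have hL0 : L ≠ 0 := by omega
    have h1b : 1 < b := by omega
    set k := Nat.log b L with hk
    have hbk : b ^ k ≤ L := Nat.pow_log_le_self b hL0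
    have hk1 : 1 ≤ k := by
      rw [hk]
      exact (Nat.le_log_iff_pow_le h1b hL0).mpr (by simpa using hLb)
    rcases lt_or_ge k m with hkm | hkm
    · have hp2 : p ≤ 2 * b^(m-k) - 2 := hkey k hk1 (le_of_lt hkm) hbk
      have hLk : L < b^(k+1) := Nat.lt_pow_succ_log_self h1b L
      have hX : 1 ≤ b ^ (m-k) := Nat.one_le_pow _ _ hb0
      have hgen : ∀ X : ℕ, 1 ≤ X → p ≤ 2*X - 2 → p + 1 ≤ 2*X - 1 := by
        intro X h1 h2; omega
      have h1 : (p+1) * (L+1) ≤ (2 * b^(m-k) - 1) * b^(k+1) :=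
        Nat.mul_le_mul (hgen _ hX hp2) (Nat.succ_le_of_lt hLk)
      have hXW : b^(m-k) * b^(k+1) = b^(m+1) := by
        rw [← pow_add]; congr 1; omega
      have hbW : b^2 ≤ b^(k+1) := Nat.pow_le_pow_right (by omega) (by omega)
      calc (p+1)*(L+1) + b^2 ≤ (2*b^(m-k) - 1) * b^(k+1) + b^(k+1) :=
            Nat.add_le_add h1 hbW
        _ = (2*b^(m-k) - 1 + 1) * b^(k+1) := by rw [add_mul, one_mul]
        _ = (2*b^(m-k)) * b^(k+1) := by
              congr 1
              have hgen2 : ∀ X : ℕ, 1 ≤ X → 2*X - 1 + 1 = 2*X := by intro X h1; omega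
              exact hgen2 _ hX
        _ = 2 * (b^(m-k) * b^(k+1)) := by ring
        _ = 2 * b^(m+1) := by rw [hXW]
    · have hbm : b^m ≤ L := le_trans (Nat.pow_le_pow_right (by omega) hkm) hbk
      have hp0 : p ≤ 2 * b^(m-m) - 2 := hkey m (by omega) le_rfl hbm
      rw [Nat.sub_self, pow_zero] at hp0
      have hp0' : p = 0 := by omega
      have h1 : (p+1)*(L+1) ≤ b^m + 1 := by
        rw [hp0']
        simpa using Nat.add_le_add_right hL 1
      have h2 : b^m + 1 + b^2 ≤ 2 * b^(m+1) := by
        have e2 : b^m + b^m ≤ b * b^m := by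
          calc b^m + b^m = 2 * b^m := by ring
            _ ≤ b * b^m := Nat.mul_le_mul_right _ hb
        have e3 : 1 ≤ b^m := Nat.one_le_pow _ _ hb0
        have e4 : b^2 ≤ b^(m+1) := Nat.pow_le_pow_right (by omega) (by omega)
        have e5 : b * b^m = b^(m+1) := (pow_succ' b m).symm
        omega
      exact le_trans (Nat.add_le_add_right h1 _) h2
  
lemma nutMap_eq (b m : ℕ) (hb : 0 < b) (c : ℕ → ℕ → ℕ) (n : ℕ) :
    nutMap b m c n = (Ynet b m c (fun _ => 0) n : ℝ) / (b:ℝ)^m := by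
  have hbR : (b:ℝ) ≠ 0 := Nat.cast_ne_zero.mpr hb.ne'
  unfold nutMap Ynet
  push_cast
  rw [Finset.sum_div]
  apply Finset.sum_congr rfl
  intro i hi
  rw [Finset.mem_Icc] at hi
  have hpow : (b:ℝ)^(m-i) * (b:ℝ)^i = (b:ℝ)^m := by
    rw [← pow_add]; congr 1; omega
  have hbi : (b:ℝ)^i ≠ 0 := pow_ne_zero _ hbR
  have hbm : (b:ℝ)^m ≠ 0 := pow_ne_zero _ hbR
  simp only [zero_add]
  rw [div_eq_div_iff hbi hbm]
  rw [mul_assoc, ← hpow]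

/-- Upper bound for the dispersion of NUT nets: every axis-parallel box
`[x₁,y₁) × [x₂,y₂) ⊆ [0,1]²` containing no point of the NUT net has area at most
`(2b/b^m)(1 − b/(2b^m))`. -/
theorem disp_NUT_le (b m : ℕ) (hb : Nat.Prime b) (hm : 1 ≤ m) (c : ℕ → ℕ → ℕ)
    (hc : ∀ i j, c i j < b) (hdiag : ∀ i, 1 ≤ i → i ≤ m → c i i ≠ 0)
    (P : Set (ℝ × ℝ))
    (hP : P = {p : ℝ × ℝ | ∃ n < b ^ m, p = ((n : ℝ) / (b : ℝ) ^ m, nutMap b m c n)}) :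
    (∀ x₁ y₁ x₂ y₂ : ℝ, 0 ≤ x₁ → x₁ ≤ y₁ → y₁ ≤ 1 → 0 ≤ x₂ → x₂ ≤ y₂ → y₂ ≤ 1 →
      (∀ p ∈ P, p ∉ Set.Ico x₁ y₁ ×ˢ Set.Ico x₂ y₂) →
      (y₁ - x₁) * (y₂ - x₂) ≤ 2 * (b : ℝ) / (b : ℝ) ^ m * (1 - (b : ℝ) / (2 * (b : ℝ) ^ m))) ∧
    disp P ≤ 2 * (b : ℝ) / (b : ℝ) ^ m * (1 - (b : ℝ) / (2 * (b : ℝ) ^ m)) := by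
  have hb0 : 0 < b := hb.pos
  have hb2 : 2 ≤ b := hb.two_le
  have hbR : (0:ℝ) < (b:ℝ) := by exact_mod_cast hb0
  have hbmR : (0:ℝ) < (b:ℝ)^m := by positivity
  have hbox : ∀ x₁ y₁ x₂ y₂ : ℝ, 0 ≤ x₁ → x₁ ≤ y₁ → y₁ ≤ 1 → 0 ≤ x₂ → x₂ ≤ y₂ → y₂ ≤ 1 →
      (∀ p ∈ P, p ∉ Set.Ico x₁ y₁ ×ˢ Set.Ico x₂ y₂) →
      (y₁ - x₁) * (y₂ - x₂) ≤ 2 * (b : ℝ) / (b : ℝ) ^ m * (1 - (b : ℝ) / (2 * (b : ℝ) ^ m)) := by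
    intro x1 y1 x2 y2 hx1 hxy1 hy1 hx2 hxy2 hy2 hempty
    by_cases hm1 : m = 1
    · subst hm1
      have hrhs : 2 * (b:ℝ) / (b:ℝ)^1 * (1 - (b:ℝ) / (2 * (b:ℝ)^1)) = 1 := by
        field_simp
        ring
      rw [hrhs]
      exact mul_le_one₀ (by linarith) (by linarith) (by linarith)
    · have hm2 : 2 ≤ m := by omega
      set N := b ^ m with hN
      have hNpos : 0 < N := pow_pos hb0 _
      have hNR : (0:ℝ) < ((N:ℕ):ℝ) := by exact_mod_cast hNpos
      have hNcast : ((N:ℕ):ℝ) = (b:ℝ)^m := by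
        rw [hN]; push_cast; ring
      set A1 := ⌈x1 * (N:ℝ)⌉₊ with hA1
      set B1 := ⌈y1 * (N:ℝ)⌉₊ with hB1
      set A2 := ⌈x2 * (N:ℝ)⌉₊ with hA2
      set B2 := ⌈y2 * (N:ℝ)⌉₊ with hB2
      have hB1N : B1 ≤ N := by
        rw [hB1]
        apply Nat.ceil_le.mpr
        calc y1 * (N:ℝ) ≤ 1 * (N:ℝ) := by nlinarith
          _ = (N:ℝ) := by ring
      have hB2N : B2 ≤ N := by
        rw [hB2]
        apply Nat.ceil_le.mpr
        calc y2 * (N:ℝ) ≤ 1 * (N:ℝ) := by nlinarith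
          _ = (N:ℝ) := by ring
      set p := B1 - A1 with hp
      set L := B2 - A2 with hL
      have hdiag' : ∀ i, 1 ≤ i → i ≤ m → c i i % b ≠ 0 := by
        intro i h1 h2
        rw [Nat.mod_eq_of_lt (hc i i)]
        exact hdiag i h1 h2
      have hemp : ∀ n, A1 ≤ n → n < A1 + p → ∀ u, u < L →
          Ynet b m c (fun _ => 0) n ≠ (A2 + u) % b ^ m := by
        intro n hn1 hn2 u hu heq
        have hnB1 : n < B1 := by omega
        have hnN : n < N := lt_of_lt_of_le hnB1 hB1N
        have hxn : x1 ≤ (n:ℝ)/((N:ℕ):ℝ) := by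
          rw [le_div_iff₀ hNR]
          exact Nat.ceil_le.mp hn1
        have hyn : (n:ℝ)/((N:ℕ):ℝ) < y1 := by
          rw [div_lt_iff₀ hNR]
          exact Nat.lt_ceil.mp hnB1
        have hA2u : A2 + u < B2 := by omega
        have hmod : (A2 + u) % N = A2 + u := Nat.mod_eq_of_lt (lt_of_lt_of_le hA2u hB2N)
        have hν : nutMap b m c n = ((A2 + u : ℕ):ℝ)/((N:ℕ):ℝ) := by
          rw [nutMap_eq b m hb0 c n, heq, ← hN, hmod, ← hNcast]
        have h2a : x2 ≤ nutMap b m c n := by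
          rw [hν, le_div_iff₀ hNR]
          calc x2 * ((N:ℕ):ℝ) ≤ (A2:ℝ) := Nat.le_ceil _
            _ ≤ ((A2 + u : ℕ):ℝ) := by push_cast; linarith [Nat.cast_nonneg (α := ℝ) u]
        have h2b : nutMap b m c n < y2 := by
          rw [hν, div_lt_iff₀ hNR]
          exact Nat.lt_ceil.mp hA2u
        apply hempty ((n:ℝ)/(b:ℝ)^m, nutMap b m c n)
        · rw [hP]; exact ⟨n, hnN, rfl⟩
        · constructor
          · constructor
            · rw [← hNcast]; exact hxn
            · rw [← hNcast]; exact hyn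
          · exact ⟨h2a, h2b⟩
      have hkey : ∀ k, 1 ≤ k → k ≤ m → b ^ k ≤ L → p ≤ 2 * b ^ (m - k) - 2 :=
        fun k h1 h2 h3 => keyLemma b hb m k c (fun _ => 0) A1 p A2 L h1 h2 hdiag' h3 hemp
      have hpN : p ≤ b ^ m := by omega
      have hLN : L ≤ b ^ m := by omega
      have hprod : (p + 1) * (L + 1) + b ^ 2 ≤ 2 * b ^ (m + 1) :=
        prodBound b m p L hb2 hm2 hpN hLN hkey
      -- real side
      have hw : (y1 - x1) * ((N:ℕ):ℝ) ≤ (p:ℝ) + 1 := by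
        have h1 : y1 * ((N:ℕ):ℝ) ≤ (B1:ℝ) := Nat.le_ceil _
        have h2 : (A1:ℝ) < x1 * ((N:ℕ):ℝ) + 1 := Nat.ceil_lt_add_one (by positivity)
        have h3 : (B1:ℝ) - (A1:ℝ) ≤ (p:ℝ) := by
          rcases le_or_gt A1 B1 with h | h
          · rw [hp, Nat.cast_sub h]
          · have h5 : (B1:ℝ) < (A1:ℝ) := by exact_mod_cast h
            have h6 : (0:ℝ) ≤ (p:ℝ) := Nat.cast_nonneg _
            linarith
        nlinarith
      have hh : (y2 - x2) * ((N:ℕ):ℝ) ≤ (L:ℝ) + 1 := by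
        have h1 : y2 * ((N:ℕ):ℝ) ≤ (B2:ℝ) := Nat.le_ceil _
        have h2 : (A2:ℝ) < x2 * ((N:ℕ):ℝ) + 1 := Nat.ceil_lt_add_one (by positivity)
        have h3 : (B2:ℝ) - (A2:ℝ) ≤ (L:ℝ) := by
          rcases le_or_gt A2 B2 with h | h
          · rw [hL, Nat.cast_sub h]
          · have h5 : (B2:ℝ) < (A2:ℝ) := by exact_mod_cast h
            have h6 : (0:ℝ) ≤ (L:ℝ) := Nat.cast_nonneg _
            linarith
        nlinarith
      have hwh : (y1-x1)*(y2-x2) * ((N:ℕ):ℝ)^2 ≤ ((p:ℝ)+1) * ((L:ℝ)+1) := by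
        have hw0 : (0:ℝ) ≤ (y1-x1) := by linarith
        have hh0 : (0:ℝ) ≤ (y2-x2) := by linarith
        calc (y1-x1)*(y2-x2)*((N:ℕ):ℝ)^2 = ((y1-x1)*((N:ℕ):ℝ)) * ((y2-x2)*((N:ℕ):ℝ)) := by ring
          _ ≤ ((p:ℝ)+1) * ((L:ℝ)+1) := by
              apply mul_le_mul hw hh (by positivity) (by positivity)
      have hcast : ((p:ℝ)+1) * ((L:ℝ)+1) ≤ 2 * (b:ℝ)^(m+1) - (b:ℝ)^2 := by
        have h7 : (((p + 1) * (L + 1) + b ^ 2 : ℕ) : ℝ) ≤ ((2 * b ^ (m + 1) : ℕ) : ℝ) := by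
          exact_mod_cast hprod
        push_cast at h7
        linarith
      have hNR2 : (0:ℝ) < ((N:ℕ):ℝ)^2 := by positivity
      have h5 : (y1-x1)*(y2-x2) ≤ (2 * (b:ℝ)^(m+1) - (b:ℝ)^2) / ((N:ℕ):ℝ)^2 := by
        rw [le_div_iff₀ hNR2]
        linarith
      have hfinal : (2 * (b:ℝ)^(m+1) - (b:ℝ)^2) / ((N:ℕ):ℝ)^2
          = 2 * (b:ℝ) / (b:ℝ)^m * (1 - (b:ℝ) / (2 * (b:ℝ)^m)) := by
        rw [hNcast]
        have hbR' : (b:ℝ) ≠ 0 := ne_of_gt hbR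
        have hbmR' : (b:ℝ)^m ≠ 0 := ne_of_gt hbmR
        field_simp
        ring
      rw [← hfinal]
      exact h5
  constructor
  · exact hbox
  · unfold disp
    apply Real.sSup_le
    · rintro A ⟨x1, y1, x2, y2, h1, h2, h3, h4, h5, h6, h7, rfl⟩
      exact hbox x1 y1 x2 y2 h1 h2 h3 h4 h5 h6 h7
    · have h1 : (b:ℝ) ≤ (b:ℝ)^m := by
        calc (b:ℝ) = (b:ℝ)^1 := (pow_one _).symm
          _ ≤ (b:ℝ)^m := pow_le_pow_right₀ (by exact_mod_cast hb0) hm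
      have h2 : (b:ℝ) / (2 * (b:ℝ)^m) ≤ 1 := by
        rw [div_le_one (by positivity)]
        linarith
      have h3 : (0:ℝ) ≤ 2 * (b:ℝ) / (b:ℝ)^m := by positivity
      exact mul_nonneg h3 (by linarith)
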